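/- There is a constant e such that for every integer c ≥ 0 and every binary string x with |x| ≥ e, sophistication at significance c + e·⌊log₂|x|⌋ is bounded by the Busy Beaver logical depth at significance c up to a logarithmic term: soph_{c + e·⌊log₂|x|⌋}(x) ≤ ld^bb_c(x) + e·⌊log₂|x|⌋. -/

import Mathlib

/-- Bijective binary encoding of binary strings as natural numbers. -/
def strToNat : List Bool → ℕ
  | [] => 0
  | b :: t => (if b then 2 else 1) + 2 * strToNat t

/-- The partial result of running machine `M` on program `p` and auxiliary input `d`. -/
def evalS (M : Nat.Partrec.Code) (p d : List Bool) : Part ℕ :=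
  M.eval (Nat.pair (strToNat p) (strToNat d))

/-- `M(p, d) = x`. -/
def outputs (M : Nat.Partrec.Code) (p d x : List Bool) : Prop :=
  strToNat x ∈ evalS M p d

/-- `M` halts on program `p` (with empty auxiliary input). -/
def haltsOn (M : Nat.Partrec.Code) (p : List Bool) : Prop :=
  (evalS M p []).Dom

/-- The number of computation steps taken by `M` on program `p` (with empty auxiliary
input); meaningful only when `M` halts on `p`. -/
noncomputable def halttime (M : Nat.Partrec.Code) (p : List Bool) : ℕ :=
  sInf {t | (Nat.Partrec.Code.evaln t M (Nat.pair (strToNat p) 0)).isSome}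

/-- `M` is a universal machine: it simulates every machine `V` via a prefix `w_V`. -/
def Universal (M : Nat.Partrec.Code) : Prop :=
  ∀ V : Nat.Partrec.Code, ∃ w : List Bool, ∀ p y : List Bool,
    (evalS V p y).Dom → evalS M (w ++ p) y = evalS V p y

/-- Plain Kolmogorov complexity `C(x)` on machine `M`. -/
noncomputable def Cpx (M : Nat.Partrec.Code) (x : List Bool) : ℕ :=
  sInf {n | ∃ p : List Bool, p.length = n ∧ outputs M p [] x}

/-- Sophistication of `x` at (integer) significance level `c`. -/
noncomputable def soph (M : Nat.Partrec.Code) (c : ℤ) (x : List Bool) : ℕ :=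
  sInf {n | ∃ p : List Bool, p.length = n ∧ (∀ d : List Bool, (evalS M p d).Dom) ∧
    ∃ d : List Bool, outputs M p d x ∧ (p.length + d.length : ℤ) ≤ (Cpx M x : ℤ) + c}

/-- Logical depth of `x` at significance level `c`. -/
noncomputable def ld (M : Nat.Partrec.Code) (c : ℕ) (x : List Bool) : ℕ :=
  sInf {t | ∃ p : List Bool, p.length ≤ Cpx M x + c ∧ outputs M p [] x ∧ halttime M p = t}

/-- The inverse Busy Beaver function `bb(n)`. -/
noncomputable def bbInv (M : Nat.Partrec.Code) (n : ℕ) : ℕ :=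
  sInf {k | ∃ p : List Bool, p.length = k ∧ haltsOn M p ∧ n ≤ halttime M p}

/-- Busy Beaver logical depth of `x` at significance `c`. -/
noncomputable def ldbb (M : Nat.Partrec.Code) (c : ℕ) (x : List Bool) : ℕ :=
  bbInv M (ld M c x)

/-- The Busy Beaver function `BB(l)`. -/
noncomputable def BB (M : Nat.Partrec.Code) (l : ℕ) : ℕ :=
  sSup {t | ∃ p : List Bool, p.length ≤ l ∧ haltsOn M p ∧ halttime M p = t}

/-- Canonical encoding of a finite set of binary strings: the code of the sorted list
of the codes of its elements. -/
def setCode (S : Finset (List Bool)) : ℕ :=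
  Encodable.encode ((S.image strToNat).sort (· ≤ ·))

/-- Kolmogorov complexity `C(S)` of a finite set of binary strings on machine `M`. -/
noncomputable def CSet (M : Nat.Partrec.Code) (S : Finset (List Bool)) : ℕ :=
  sInf {n | ∃ p : List Bool, p.length = n ∧ setCode S ∈ evalS M p []}

/-- Conditional Kolmogorov complexity `C(x | m)` where the condition is a natural number. -/
noncomputable def CpxCondN (M : Nat.Partrec.Code) (x : List Bool) (m : ℕ) : ℕ :=
  sInf {n | ∃ p : List Bool, p.length = n ∧ strToNat x ∈ M.eval (Nat.pair (strToNat p) m)}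

namespace LB

def natToStr : ℕ → List Bool
  | 0 => []
  | (n+1) =>
    if (n+1) % 2 = 1 then false :: natToStr (n / 2) else true :: natToStr ((n+1) / 2 - 1)
decreasing_by all_goals omega

@[simp] lemma strToNat_nil : strToNat [] = 0 := rfl
@[simp] lemma strToNat_false (t : List Bool) : strToNat (false :: t) = 1 + 2 * strToNat t := rfl
@[simp] lemma strToNat_true (t : List Bool) : strToNat (true :: t) = 2 + 2 * strToNat t := rfl

@[simp] lemma natToStr_zero : natToStr 0 = [] := by rw [natToStr]

lemma natToStr_succ (n : ℕ) :
    natToStr (n+1) =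
      if (n+1) % 2 = 1 then false :: natToStr (n / 2) else true :: natToStr ((n+1) / 2 - 1) := by
  rw [natToStr]

@[simp] lemma natToStr_strToNat (l : List Bool) : natToStr (strToNat l) = l := by
  induction l with
  | nil => simp
  | cons b t ih =>
    cases b
    · have h1 : strToNat (false :: t) = (2 * strToNat t) + 1 := by simp; ring
      rw [h1, natToStr_succ, if_pos (by omega)]
      have h3 : 2 * strToNat t / 2 = strToNat t := by omega
      rw [h3, ih]
    · have h1 : strToNat (true :: t) = (2 * strToNat t + 1) + 1 := by simp; ring
      rw [h1, natToStr_succ, if_neg (by omega)]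
      have h3 : (2 * strToNat t + 1 + 1) / 2 - 1 = strToNat t := by omega
      rw [h3, ih]

lemma strToNat_natToStr (m : ℕ) : strToNat (natToStr m) = m := by
  induction m using Nat.strong_induction_on with
  | _ m ih =>
    match m with
    | 0 => simp
    | (n+1) =>
      rw [natToStr_succ]
      by_cases h : (n+1) % 2 = 1
      · rw [if_pos h, strToNat_false, ih (n/2) (by omega)]; omega
      · rw [if_neg h, strToNat_true, ih ((n+1)/2 - 1) (by omega)]; omega

lemma strToNat_injective : Function.Injective strToNat := by
  intro a b h
  have := congrArg natToStr h
  simpa using this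

lemma strToNat_append (a b : List Bool) :
    strToNat (a ++ b) = strToNat a + 2 ^ a.length * strToNat b := by
  induction a with
  | nil => simp
  | cons x t ih =>
    cases x <;> simp [ih, List.length_cons, pow_succ] <;> ring

lemma strToNat_lb (l : List Bool) : 2 ^ l.length ≤ strToNat l + 1 := by
  induction l with
  | nil => simp
  | cons x t ih => cases x <;> simp [pow_succ] <;> omega

lemma strToNat_ub (l : List Bool) : strToNat l + 2 ≤ 2 ^ (l.length + 1) := by
  induction l with
  | nil => simp
  | cons x t ih =>
    cases x <;> simp only [strToNat_false, strToNat_true, List.length_cons, pow_succ] <;> omega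

lemma length_natToStr_le {m L : ℕ} (h : m + 2 ≤ 2 ^ (L + 1)) : (natToStr m).length ≤ L := by
  by_contra hc
  push_neg at hc
  have h1 : 2 ^ (L + 1) ≤ 2 ^ (natToStr m).length := Nat.pow_le_pow_right (by norm_num) hc
  have h2 := strToNat_lb (natToStr m)
  rw [strToNat_natToStr] at h2
  omega

lemma length_natToStr_le_log (m : ℕ) : (natToStr m).length ≤ Nat.log 2 (m + 1) := by
  have h2 := strToNat_lb (natToStr m)
  rw [strToNat_natToStr] at h2
  exact (Nat.le_log_iff_pow_le (by norm_num) (by omega)).2 h2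


def cntUpTo (f : ℕ → Bool) (N : ℕ) : ℕ :=
  Nat.rec 0 (fun m ih => ih + (bif f m then 1 else 0)) N

@[simp] lemma cntUpTo_zero (f : ℕ → Bool) : cntUpTo f 0 = 0 := rfl
@[simp] lemma cntUpTo_succ (f : ℕ → Bool) (N : ℕ) :
    cntUpTo f (N+1) = cntUpTo f N + (bif f N then 1 else 0) := rfl

lemma cntUpTo_le (f : ℕ → Bool) (N : ℕ) : cntUpTo f N ≤ N := by
  induction N with
  | zero => simp
  | succ N ih => rw [cntUpTo_succ]; cases f N <;> simp <;> omega

lemma cntUpTo_mono_pred {f g : ℕ → Bool} {N : ℕ} (h : ∀ m < N, f m = true → g m = true) :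
    cntUpTo f N ≤ cntUpTo g N := by
  induction N with
  | zero => simp
  | succ N ih =>
    have h1 : cntUpTo f N ≤ cntUpTo g N := ih (fun m hm => h m (by omega))
    rw [cntUpTo_succ, cntUpTo_succ]
    rcases hf : f N with _ | _
    · cases g N <;> simp <;> omega
    · rw [h N (by omega) hf]; simpa using h1

lemma cntUpTo_lt_of_witness {f g : ℕ → Bool} {N m₀ : ℕ}
    (h : ∀ m < N, f m = true → g m = true) (hm₀ : m₀ < N)
    (hg : g m₀ = true) (hf : f m₀ = false) :
    cntUpTo f N < cntUpTo g N := by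
  induction N with
  | zero => omega
  | succ N ih =>
    rw [cntUpTo_succ, cntUpTo_succ]
    rcases Nat.lt_succ_iff_lt_or_eq.1 hm₀ with hm | rfl
    · have h1 := ih (fun m hm => h m (by omega)) hm
      rcases hfN : f N with _ | _
      · cases g N <;> simp <;> omega
      · rw [h N (by omega) hfN]; simpa using h1
    · have h1 : cntUpTo f m₀ ≤ cntUpTo g m₀ := cntUpTo_mono_pred (fun m hm => h m (by omega))
      rw [hf, hg]; simp; omega

lemma cntUpTo_split {f g : ℕ → Bool} {N : ℕ} (h : ∀ m < N, f m = true → g m = true) :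
    cntUpTo g N = cntUpTo f N + cntUpTo (fun m => g m && !f m) N := by
  induction N with
  | zero => simp
  | succ N ih =>
    have h1 := ih (fun m hm => h m (by omega))
    rw [cntUpTo_succ, cntUpTo_succ, cntUpTo_succ, h1]
    rcases hfN : f N with _ | _
    · cases g N <;> simp <;> omega
    · rw [h N (by omega) hfN]; simp; omega

lemma cntUpTo_pos {f : ℕ → Bool} {N m₀ : ℕ} (hm₀ : m₀ < N) (hf : f m₀ = true) :
    0 < cntUpTo f N := by
  have := cntUpTo_lt_of_witness (f := fun _ => false) (g := f)
    (fun m _ h => by simp at h) hm₀ hf rfl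
  have h0 : ∀ M, cntUpTo (fun _ => false) M = 0 := by
    intro M
    induction M with
    | zero => simp
    | succ M ih => rw [cntUpTo_succ, ih]; simp
  rw [h0] at this
  omega

lemma cntUpTo_pos_iff {f : ℕ → Bool} {N : ℕ} :
    0 < cntUpTo f N ↔ ∃ m < N, f m = true := by
  constructor
  · intro h
    induction N with
    | zero => simp at h
    | succ N ih =>
      rcases hfN : f N with _ | _
      · rw [cntUpTo_succ, hfN] at h
        simp at h
        rcases ih h with ⟨m, hm, hfm⟩
        exact ⟨m, by omega, hfm⟩
      · exact ⟨N, by omega, hfN⟩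
  · rintro ⟨m, hm, hfm⟩; exact cntUpTo_pos hm hfm

lemma cntUpTo_threshold {f : ℕ → Bool} {N h₀ : ℕ} (h : ∀ m < N, (f m = true ↔ h₀ ≤ m)) :
    cntUpTo f N = N - h₀ := by
  induction N with
  | zero => simp
  | succ N ih =>
    rw [cntUpTo_succ, ih (fun m hm => h m (by omega))]
    rcases hfN : f N with _ | _
    · have := (h N (by omega)).not
      simp [hfN] at this
      simp; omega
    · have := (h N (by omega)).1 hfN
      simp; omega

open Nat.Partrec (Code)
open Nat.Partrec.Code

lemma nat_pair_le (a b : ℕ) : Nat.pair a b ≤ (a + b + 1)^2 := by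
  rw [Nat.pair]; split <;> nlinarith

theorem evaln_out (c : Code) :
    ∃ D : ℕ, 0 < D ∧ ∀ k n x, x ∈ evaln k c n → x ≤ (k+1)^D := by
  induction c with
  | zero =>
    refine ⟨1, one_pos, fun k n x h => ?_⟩
    match k with
    | 0 => simp [evaln] at h
    | k+1 =>
      simp [evaln, Option.bind_eq_some_iff] at h
      simp only [pow_one]
      omega
  | succ =>
    refine ⟨1, one_pos, fun k n x h => ?_⟩
    match k with
    | 0 => simp [evaln] at h
    | k+1 =>
      simp [evaln, Option.bind_eq_some_iff] at h
      simp only [pow_one]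
      omega
  | left =>
    refine ⟨1, one_pos, fun k n x h => ?_⟩
    match k with
    | 0 => simp [evaln] at h
    | k+1 =>
      simp [evaln, Option.bind_eq_some_iff] at h
      have := Nat.unpair_left_le n
      simp only [pow_one]
      omega
  | right =>
    refine ⟨1, one_pos, fun k n x h => ?_⟩
    match k with
    | 0 => simp [evaln] at h
    | k+1 =>
      simp [evaln, Option.bind_eq_some_iff] at h
      have := Nat.unpair_right_le n
      simp only [pow_one]
      omega
  | pair cf cg ihf ihg =>
    obtain ⟨Df, hDf0, hDf⟩ := ihf
    obtain ⟨Dg, hDg0, hDg⟩ := ihg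
    refine ⟨2 * max Df Dg + 4, by omega, fun k n x h => ?_⟩
    match k with
    | 0 => simp [evaln] at h
    | k+1 =>
      simp [evaln, Option.bind_eq_some_iff, Seq.seq] at h
      obtain ⟨-, y, ef, z, eg, rfl⟩ := h
      set M := (k+2)^(max Df Dg) with hM
      have hM1 : 1 ≤ M := Nat.one_le_pow _ _ (by omega)
      have hy : y ≤ M := le_trans (hDf _ _ _ ef) (Nat.pow_le_pow_right (by omega) (le_max_left _ _))
      have hz : z ≤ M := le_trans (hDg _ _ _ eg) (Nat.pow_le_pow_right (by omega) (le_max_right _ _))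
      have h1 : Nat.pair y z ≤ (y + z + 1)^2 := nat_pair_le y z
      have h2 : (y + z + 1)^2 ≤ (3*M)^2 := Nat.pow_le_pow_left (by omega) 2
      have h3 : (3*M)^2 ≤ (k+2)^4 * M^2 := by
        have : (9 : ℕ) ≤ (k+2)^4 := by
          calc (9:ℕ) ≤ 2^4 := by norm_num
          _ ≤ (k+2)^4 := Nat.pow_le_pow_left (by omega) 4
        nlinarith
      have h4 : (k+2)^4 * M^2 = (k+2)^(2 * max Df Dg + 4) := by
        rw [hM, ← pow_mul, ← pow_add]
        ring_nf
      show Nat.pair y z ≤ (k+2)^(2 * max Df Dg + 4)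
      omega
  | comp cf cg ihf ihg =>
    obtain ⟨Df, hDf0, hDf⟩ := ihf
    obtain ⟨Dg, hDg0, hDg⟩ := ihg
    refine ⟨max Df Dg, by omega, fun k n x h => ?_⟩
    match k with
    | 0 => simp [evaln] at h
    | k+1 =>
      simp [evaln, Option.bind_eq_some_iff] at h
      obtain ⟨-, y, eg, ef⟩ := h
      exact le_trans (hDf _ _ _ ef) (Nat.pow_le_pow_right (by omega) (le_max_left _ _))
  | prec cf cg ihf ihg =>
    obtain ⟨Df, hDf0, hDf⟩ := ihf
    obtain ⟨Dg, hDg0, hDg⟩ := ihg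
    refine ⟨max Df Dg, by omega, fun k n x h => ?_⟩
    match k with
    | 0 => simp [evaln] at h
    | k+1 =>
      simp [evaln, Option.bind_eq_some_iff] at h
      obtain ⟨-, h⟩ := h
      revert h
      cases hnu : n.unpair.2 with
      | zero =>
        intro h
        simp at h
        exact le_trans (hDf _ _ _ h) (Nat.pow_le_pow_right (by omega) (le_max_left _ _))
      | succ m =>
        intro h
        simp [Option.bind_eq_some_iff] at h
        obtain ⟨y, -, hy⟩ := h
        exact le_trans (hDg _ _ _ hy) (Nat.pow_le_pow_right (by omega) (le_max_right _ _))
  | rfind' cf ihf =>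
    refine ⟨1, one_pos, ?_⟩
    intro k
    induction k with
    | zero => intro n x h; simp [evaln] at h
    | succ k ihk =>
      intro n x h
      simp [evaln, Option.bind_eq_some_iff] at h
      obtain ⟨hnk, y, -, hy⟩ := h
      by_cases hy0 : y = 0
      · simp [hy0] at hy
        have := Nat.unpair_right_le n
        simp only [pow_one]
        omega
      · simp [hy0] at hy
        have := ihk _ _ hy
        simp only [pow_one] at this ⊢
        omega
-- digit-level ops
def tailD (b : ℕ) : ℕ := if b % 2 = 1 then b / 2 else b / 2 - 1

def dropD (i b : ℕ) : ℕ := Nat.rec b (fun _ ih => tailD ih) i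

@[simp] lemma dropD_zero (b : ℕ) : dropD 0 b = b := rfl
@[simp] lemma dropD_succ (i b : ℕ) : dropD (i+1) b = tailD (dropD i b) := rfl

@[simp] lemma tailD_strToNat (s : List Bool) : tailD (strToNat s) = strToNat s.tail := by
  cases s with
  | nil => simp [tailD]
  | cons x t => cases x <;> simp [tailD] <;> omega

lemma dropD_strToNat (i : ℕ) (s : List Bool) : dropD i (strToNat s) = strToNat (s.drop i) := by
  induction i with
  | zero => simp
  | succ i ih => rw [dropD_succ, ih, tailD_strToNat, List.tail_drop]

def leadStep : ℕ × ℕ → ℕ × ℕ := fun s =>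
  if s.1 ≠ 0 ∧ s.1 % 2 = 0 then (s.1 / 2 - 1, s.2 + 1) else s

def leadIter (N : ℕ) (s : ℕ × ℕ) : ℕ × ℕ := Nat.rec s (fun _ ih => leadStep ih) N

@[simp] lemma leadIter_zero (s : ℕ × ℕ) : leadIter 0 s = s := rfl
@[simp] lemma leadIter_succ (N : ℕ) (s : ℕ × ℕ) :
    leadIter (N+1) s = leadStep (leadIter N s) := rfl

lemma leadIter_eq_iterate (N : ℕ) (s : ℕ × ℕ) : leadIter N s = leadStep^[N] s := by
  induction N with
  | zero => simp
  | succ N ih => rw [leadIter_succ, ih, Function.iterate_succ_apply']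

def leadT (b : ℕ) : ℕ := (leadIter b (b, 0)).2

lemma leadIter_stuck {N a c : ℕ} (h : a % 2 = 1 ∨ a = 0) : leadIter N (a, c) = (a, c) := by
  have hfix : leadStep (a, c) = (a, c) := by
    simp only [leadStep]
    rw [if_neg (by simp; omega)]
  induction N with
  | zero => simp
  | succ N ih => rw [leadIter_succ, ih, hfix]

lemma leadIter_true_prefix (μ : ℕ) :
    ∀ N c rest, μ ≤ N →
      (leadIter N (strToNat (List.replicate μ true ++ false :: rest), c)).2 = c + μ := by
  induction μ with
  | zero =>
    intro N c rest _
    have h1 : strToNat (List.replicate 0 true ++ false :: rest) = 1 + 2 * strToNat rest := by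
      simp
    rw [h1, leadIter_stuck (by omega)]
    simp
  | succ μ ih =>
    intro N c rest hN
    match N, hN with
    | N+1, hN =>
      rw [leadIter_eq_iterate, Function.iterate_succ_apply, ← leadIter_eq_iterate]
      have hcur : strToNat (List.replicate (μ+1) true ++ false :: rest)
          = 2 + 2 * strToNat (List.replicate μ true ++ false :: rest) := by
        rw [List.replicate_succ, List.cons_append, strToNat_true]
      have hstep : leadStep (strToNat (List.replicate (μ+1) true ++ false :: rest), c)
          = (strToNat (List.replicate μ true ++ false :: rest), c + 1) := by
        simp only [leadStep]
        rw [if_pos (by simp; omega)]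
        have : strToNat (List.replicate (μ+1) true ++ false :: rest) / 2 - 1
            = strToNat (List.replicate μ true ++ false :: rest) := by
          rw [hcur]; omega
        simp [this]
      rw [hstep, ih N (c+1) rest (by omega)]
      omega

lemma leadT_spec (μ : ℕ) (rest : List Bool) :
    leadT (strToNat (List.replicate μ true ++ false :: rest)) = μ := by
  have hlen : μ + 1 ≤ (List.replicate μ true ++ false :: rest).length := by
    simp
  have hfuel : μ ≤ strToNat (List.replicate μ true ++ false :: rest) := by
    have h1 := strToNat_lb (List.replicate μ true ++ false :: rest)
    have h2 : 2 ^ (List.replicate μ true ++ false :: rest).length ≥ μ + 2 := by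
      calc μ + 2 ≤ (μ + 1) + 1 := by omega
      _ ≤ 2 ^ (μ+1) := Nat.succ_le_of_lt Nat.lt_two_pow_self
      _ ≤ 2 ^ (List.replicate μ true ++ false :: rest).length :=
          Nat.pow_le_pow_right (by norm_num) hlen
    omega
  rw [leadT, leadIter_true_prefix μ _ 0 rest hfuel]
  omega

def takeN (i b : ℕ) : ℕ := b - 2^i * dropD i b

lemma takeN_spec (σ τ : List Bool) : takeN σ.length (strToNat (σ ++ τ)) = strToNat σ := by
  rw [takeN, dropD_strToNat, strToNat_append]
  have : (σ ++ τ).drop σ.length = τ := by simp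
  rw [this]
  omega


-- § encodings
def encG (k r : ℕ) : List Bool :=
  List.replicate (natToStr k).length true ++ false :: (natToStr k ++ natToStr r)

def encR (k j a : ℕ) : List Bool :=
  List.replicate (natToStr k).length true ++ false :: (natToStr k ++
    (List.replicate (natToStr j).length true ++ false :: (natToStr j ++ natToStr a)))

lemma length_encG (k r : ℕ) :
    (encG k r).length = 2 * (natToStr k).length + 1 + (natToStr r).length := by
  simp [encG]; ring

lemma length_encR (k j a : ℕ) :
    (encR k j a).length = 2 * (natToStr k).length + 2 * (natToStr j).length
      + (natToStr a).length + 2 := by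
  simp [encR]; ring

def decodeG (b : ℕ) : ℕ × ℕ :=
  (takeN (leadT b) (dropD (leadT b + 1) b), dropD (leadT b) (dropD (leadT b + 1) b))

def decodeR (b : ℕ) : ℕ × ℕ × ℕ :=
  let μ := leadT b
  let b1 := dropD (μ + 1) b
  let k := takeN μ b1
  let b2 := dropD μ b1
  let ν := leadT b2
  let b3 := dropD (ν + 1) b2
  (k, takeN ν b3, dropD ν b3)

lemma parse_head (k : ℕ) (rest : List Bool) :
    leadT (strToNat (List.replicate (natToStr k).length true ++ false :: (natToStr k ++ rest)))
        = (natToStr k).length ∧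
    dropD ((natToStr k).length + 1)
        (strToNat (List.replicate (natToStr k).length true ++ false :: (natToStr k ++ rest)))
        = strToNat (natToStr k ++ rest) ∧
    takeN (natToStr k).length (strToNat (natToStr k ++ rest)) = k ∧
    dropD (natToStr k).length (strToNat (natToStr k ++ rest)) = strToNat rest := by
  set μ := (natToStr k).length with hμ
  refine ⟨leadT_spec μ _, ?_, ?_, ?_⟩
  · rw [dropD_strToNat]
    congr 1
    have : List.replicate μ true ++ false :: (natToStr k ++ rest)
        = (List.replicate μ true ++ [false]) ++ (natToStr k ++ rest) := by simp
    rw [this, List.drop_append]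
    simp [hμ]
  · rw [takeN_spec, strToNat_natToStr]
  · rw [dropD_strToNat]
    congr 1
    rw [List.drop_append]
    simp [hμ]

lemma decodeG_encG (k r : ℕ) : decodeG (strToNat (encG k r)) = (k, r) := by
  obtain ⟨h1, h2, h3, h4⟩ := parse_head k (natToStr r)
  rw [decodeG, encG, h1, h2, h3, h4, strToNat_natToStr]

lemma decodeR_encR (k j a : ℕ) : decodeR (strToNat (encR k j a)) = (k, j, a) := by
  obtain ⟨h1, h2, h3, h4⟩ := parse_head k
    (List.replicate (natToStr j).length true ++ false :: (natToStr j ++ natToStr a))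
  obtain ⟨g1, g2, g3, g4⟩ := parse_head j (natToStr a)
  rw [decodeR, encR]
  simp only [h1, h2, h3, h4, g1, g2, g3, g4, strToNat_natToStr]

-- § machine building blocks
def uhalt (U : Code) (κ m : ℕ) : Bool := (evaln κ U (Nat.pair m 0)).isSome

def uval (U : Code) (κ m : ℕ) : ℕ := (evaln κ U (Nat.pair m 0)).getD 0

noncomputable def htN (U : Code) (m : ℕ) : ℕ := sInf {κ | uhalt U κ m = true}

lemma uhalt_mono {U : Code} {κ κ' m : ℕ} (h : κ ≤ κ') (hh : uhalt U κ m = true) :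
    uhalt U κ' m = true := by
  rw [uhalt, Option.isSome_iff_exists] at hh ⊢
  obtain ⟨v, hv⟩ := hh
  exact ⟨v, evaln_mono h hv⟩

lemma uhalt_zero (U : Code) (m : ℕ) : uhalt U 0 m = false := by
  rw [uhalt]
  simp [evaln]

lemma htN_halts {U : Code} {m : ℕ} (h : ∃ κ, uhalt U κ m = true) :
    uhalt U (htN U m) m = true :=
  Nat.sInf_mem h

lemma htN_le {U : Code} {m κ : ℕ} (h : uhalt U κ m = true) : htN U m ≤ κ :=
  Nat.sInf_le h

lemma uhalt_of_htN_le {U : Code} {m κ : ℕ} (hex : ∃ κ, uhalt U κ m = true)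
    (h : htN U m ≤ κ) : uhalt U κ m = true :=
  uhalt_mono h (htN_halts hex)

lemma uhalt_false_of_lt_htN {U : Code} {m κ : ℕ} (h : κ < htN U m) : uhalt U κ m = false := by
  by_contra hc
  have : uhalt U κ m = true := by revert hc; cases uhalt U κ m <;> simp
  exact absurd (htN_le this) (by omega)

lemma htN_pos {U : Code} {m : ℕ} (h : ∃ κ, uhalt U κ m = true) : 1 ≤ htN U m := by
  by_contra hc
  have h0 : htN U m = 0 := by omega
  have := htN_halts h
  rw [h0, uhalt_zero] at this
  simp at this

def Hk (U : Code) (k κ : ℕ) : ℕ := cntUpTo (fun m => uhalt U κ m) (2 ^ (k+1) - 1)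

lemma Hk_mono {U : Code} {k κ κ' : ℕ} (h : κ ≤ κ') : Hk U k κ ≤ Hk U k κ' :=
  cntUpTo_mono_pred (fun m _ hm => uhalt_mono h hm)

def cntS (U : Code) (T m : ℕ) : ℕ := cntUpTo (fun κ => uhalt U κ m) (T+1)

lemma cntS_pos_iff {U : Code} {T m : ℕ} : 0 < cntS U T m ↔ uhalt U T m = true := by
  rw [cntS, cntUpTo_pos_iff]
  constructor
  · rintro ⟨κ, hκ, hh⟩
    exact uhalt_mono (by omega) hh
  · intro h
    exact ⟨T, by omega, h⟩

def kappaF (U : Code) (T m : ℕ) : ℕ := T + 1 - cntS U T m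

lemma kappaF_eq_htN {U : Code} {T m : ℕ} (h : uhalt U T m = true) :
    kappaF U T m = htN U m := by
  have hex : ∃ κ, uhalt U κ m = true := ⟨T, h⟩
  have hle : htN U m ≤ T := htN_le h
  have hcnt : cntS U T m = (T + 1) - htN U m := by
    rw [cntS]
    apply cntUpTo_threshold
    intro κ hκ
    constructor
    · exact htN_le
    · exact uhalt_of_htN_le hex
  rw [kappaF, hcnt]
  omega

def rnkPred (U : Code) (T m m' : ℕ) : Bool :=
  decide (0 < cntS U T m' ∧
    (kappaF U T m < kappaF U T m' ∨ (kappaF U T m' = kappaF U T m ∧ m < m')))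

def rankF (U : Code) (T k m : ℕ) : ℕ :=
  cntUpTo (fun m' => rnkPred U T m m') (2 ^ (k+1) - 1)

def findRA (U : Code) (T k r : ℕ) : ℕ → ℕ :=
  Nat.rec 0 (fun m st =>
    if st = 0 then
      (if 0 < cntS U T m ∧ rankF U T k m = r then uval U T m + 1 else 0)
    else st)

def findR (U : Code) (T k r : ℕ) : ℕ := findRA U T k r (2 ^ (k+1) - 1)

@[simp] lemma findRA_zero (U : Code) (T k r : ℕ) : findRA U T k r 0 = 0 := rfl

lemma findRA_succ (U : Code) (T k r N : ℕ) :
    findRA U T k r (N+1) =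
      if findRA U T k r N = 0 then
        (if 0 < cntS U T N ∧ rankF U T k N = r then uval U T N + 1 else 0)
      else findRA U T k r N := rfl

lemma findRA_of_none {U : Code} {T k r N : ℕ}
    (h : ∀ m < N, ¬(0 < cntS U T m ∧ rankF U T k m = r)) : findRA U T k r N = 0 := by
  induction N with
  | zero => simp
  | succ N ih =>
    rw [findRA_succ, ih (fun m hm => h m (by omega)), if_pos rfl, if_neg (h N (by omega))]

lemma findRA_spec {U : Code} {T k r N m₀ : ℕ}
    (hu : ∀ m < N, (0 < cntS U T m ∧ rankF U T k m = r) → m = m₀)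
    (hm₀ : m₀ < N) (hp : 0 < cntS U T m₀ ∧ rankF U T k m₀ = r) :
    findRA U T k r N = uval U T m₀ + 1 := by
  induction N with
  | zero => omega
  | succ N ih =>
    rw [findRA_succ]
    rcases Nat.lt_succ_iff_lt_or_eq.1 hm₀ with hm | rfl
    · rw [ih (fun m hm => hu m (by omega)) hm]
      simp
    · rw [findRA_of_none (fun m hm hpm => absurd (hu m (by omega) hpm) (by omega)),
        if_pos rfl, if_pos hp]

-- § the two machines as partial recursive functions
def fG (U : Code) : ℕ →. ℕ := fun nn =>
  (Nat.rfind (fun κ => Part.some (uhalt U κ nn.unpair.1))).map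
    (fun T => findR U T (decodeG nn.unpair.2).1 (decodeG nn.unpair.2).2 - 1)

def fR (U : Code) (D : ℕ) : ℕ →. ℕ := fun nn =>
  (Nat.rfind (fun κ => Part.some (decide
      ((decodeR nn.unpair.1).2.2 * 2 ^ (decodeR nn.unpair.1).2.1
        ≤ Hk U (decodeR nn.unpair.1).1 κ)))).map
    (fun τ => (τ + 1) ^ D)

lemma rfind_pure_eq {p : ℕ → Bool} (h : ∃ n, p n = true) :
    Nat.rfind (fun n => Part.some (p n)) = Part.some (sInf {n | p n = true}) := by
  apply Part.eq_some_iff.2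
  apply Nat.mem_rfind.2
  constructor
  · have := Nat.sInf_mem h
    rw [Part.mem_some_iff]; exact this.symm
  · intro m hm
    have := Nat.notMem_of_lt_sInf hm
    simp only [Set.mem_setOf_eq] at this
    simp [Part.mem_some_iff]
    revert this
    cases p m <;> simp

lemma fG_eq (U : Code) (a b : ℕ) (h : ∃ κ, uhalt U κ a = true) :
    fG U (Nat.pair a b) =
      Part.some (findR U (htN U a) (decodeG b).1 (decodeG b).2 - 1) := by
  rw [fG]
  simp only [Nat.unpair_pair]
  rw [rfind_pure_eq h]
  rw [Part.map_some]
  rfl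

lemma fR_eq (U : Code) (D : ℕ) (a b : ℕ)
    (h : ∃ κ, (decodeR a).2.2 * 2 ^ (decodeR a).2.1 ≤ Hk U (decodeR a).1 κ) :
    fR U D (Nat.pair a b) =
      Part.some ((sInf {κ | (decodeR a).2.2 * 2 ^ (decodeR a).2.1
        ≤ Hk U (decodeR a).1 κ} + 1) ^ D) := by
  rw [fR]
  simp only [Nat.unpair_pair]
  rw [rfind_pure_eq (by obtain ⟨κ, hκ⟩ := h; exact ⟨κ, by simp [hκ]⟩)]
  rw [Part.map_some]
  have hset : {n | decide ((decodeR a).2.2 * 2 ^ (decodeR a).2.1 ≤ Hk U (decodeR a).1 n) = true}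
      = {κ | (decodeR a).2.2 * 2 ^ (decodeR a).2.1 ≤ Hk U (decodeR a).1 κ} := by
    ext κ; simp
  rw [hset]

-- § computability
section Computability

lemma primrec_pow : Primrec₂ ((· ^ ·) : ℕ → ℕ → ℕ) :=
  Primrec₂.unpaired'.1 Nat.Primrec.pow

variable (U : Code)

lemma primrec_uhalt : Primrec₂ (uhalt U) := by
  have h1 : Primrec (fun p : ℕ × ℕ => evaln p.1 U (Nat.pair p.2 0)) :=
    primrec_evaln.comp ((Primrec.fst.pair (Primrec.const U)).pair
      (Primrec₂.natPair.comp Primrec.snd (Primrec.const 0)))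
  exact (Primrec.option_isSome.comp h1).to₂

lemma primrec_uval : Primrec₂ (uval U) := by
  have h1 : Primrec (fun p : ℕ × ℕ => evaln p.1 U (Nat.pair p.2 0)) :=
    primrec_evaln.comp ((Primrec.fst.pair (Primrec.const U)).pair
      (Primrec₂.natPair.comp Primrec.snd (Primrec.const 0)))
  exact (Primrec.option_getD.comp h1 (Primrec.const 0)).to₂

lemma primrec_cntUpTo {α} [Primcodable α] {f : α → ℕ → Bool} {g : α → ℕ}
    (hf : Primrec₂ f) (hg : Primrec g) : Primrec (fun a => cntUpTo (f a) (g a)) := by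
  have h : Primrec (fun a => Nat.rec (motive := fun _ => ℕ) 0
      (fun m ih => ih + (bif f a m then 1 else 0)) (g a)) :=
    Primrec.nat_rec' hg (Primrec.const 0)
      ((Primrec.nat_add.comp (Primrec.snd.comp Primrec.snd)
        (Primrec.cond (hf.comp Primrec.fst (Primrec.fst.comp Primrec.snd))
          (Primrec.const 1) (Primrec.const 0))).to₂)
  exact h.of_eq (fun a => rfl)

lemma primrec_Hk : Primrec₂ (Hk U) := by
  have hf : Primrec₂ (fun (p : ℕ × ℕ) (m : ℕ) => uhalt U p.2 m) :=
    ((primrec_uhalt U).comp (Primrec.snd.comp Primrec.fst) Primrec.snd).to₂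
  have hg : Primrec (fun p : ℕ × ℕ => 2 ^ (p.1 + 1) - 1) :=
    Primrec.nat_sub.comp
      (primrec_pow.comp (Primrec.const 2) (Primrec.succ.comp Primrec.fst))
      (Primrec.const 1)
  exact (primrec_cntUpTo hf hg).to₂

lemma primrec_cntS : Primrec₂ (cntS U) := by
  have hf : Primrec₂ (fun (p : ℕ × ℕ) (κ : ℕ) => uhalt U κ p.2) :=
    ((primrec_uhalt U).comp Primrec.snd (Primrec.snd.comp Primrec.fst)).to₂
  have hg : Primrec (fun p : ℕ × ℕ => p.1 + 1) := Primrec.succ.comp Primrec.fst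
  exact (primrec_cntUpTo hf hg).to₂

lemma primrec_kappaF : Primrec₂ (kappaF U) :=
  (Primrec.nat_sub.comp (Primrec.succ.comp Primrec.fst) (primrec_cntS U)).to₂

lemma primrec_rnkPred : Primrec (fun q : (ℕ × ℕ) × ℕ => rnkPred U q.1.1 q.1.2 q.2) := by
  have hT : Primrec (fun q : (ℕ × ℕ) × ℕ => q.1.1) := Primrec.fst.comp Primrec.fst
  have hm : Primrec (fun q : (ℕ × ℕ) × ℕ => q.1.2) := Primrec.snd.comp Primrec.fst
  have hm' : Primrec (fun q : (ℕ × ℕ) × ℕ => q.2) := Primrec.snd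
  have hck : Primrec (fun q : (ℕ × ℕ) × ℕ => kappaF U q.1.1 q.1.2) :=
    (primrec_kappaF U).comp hT hm
  have hck' : Primrec (fun q : (ℕ × ℕ) × ℕ => kappaF U q.1.1 q.2) :=
    (primrec_kappaF U).comp hT hm'
  have hc1 : PrimrecPred (fun q : (ℕ × ℕ) × ℕ => 0 < cntS U q.1.1 q.2) :=
    Primrec.nat_lt.comp (Primrec.const 0) ((primrec_cntS U).comp hT hm')
  have hc2 : PrimrecPred (fun q : (ℕ × ℕ) × ℕ =>
      kappaF U q.1.1 q.1.2 < kappaF U q.1.1 q.2) :=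
    Primrec.nat_lt.comp hck hck'
  have hc3 : PrimrecPred (fun q : (ℕ × ℕ) × ℕ =>
      kappaF U q.1.1 q.2 = kappaF U q.1.1 q.1.2) :=
    Primrec.eq.comp hck' hck
  have hc4 : PrimrecPred (fun q : (ℕ × ℕ) × ℕ => q.1.2 < q.2) :=
    Primrec.nat_lt.comp hm hm'
  have h := hc1.and (hc2.or (hc3.and hc4))
  exact Primrec.of_eq h.decide (fun q => by unfold rnkPred; exact decide_eq_decide.2 Iff.rfl)

lemma primrec_rankF : Primrec (fun q : (ℕ × ℕ) × ℕ => rankF U q.1.1 q.1.2 q.2) := by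
  -- q = ((T,k),m)
  have hf : Primrec₂ (fun (q : (ℕ × ℕ) × ℕ) (m' : ℕ) => rnkPred U q.1.1 q.2 m') :=
    ((primrec_rnkPred U).comp
      (((Primrec.fst.comp (Primrec.fst.comp Primrec.fst)).pair
        (Primrec.snd.comp Primrec.fst)).pair Primrec.snd)).to₂
  have hg : Primrec (fun q : (ℕ × ℕ) × ℕ => 2 ^ (q.1.2 + 1) - 1) :=
    Primrec.nat_sub.comp
      (primrec_pow.comp (Primrec.const 2)
        (Primrec.succ.comp (Primrec.snd.comp Primrec.fst)))
      (Primrec.const 1)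
  have h := primrec_cntUpTo hf hg
  exact h.of_eq (fun q => by rw [rankF])

lemma primrec_findR : Primrec (fun q : (ℕ × ℕ) × ℕ => findR U q.1.1 q.1.2 q.2) := by
  -- q = ((T,k),r)
  have hT : Primrec (fun q : (ℕ × ℕ) × ℕ => q.1.1) := Primrec.fst.comp Primrec.fst
  have hk : Primrec (fun q : (ℕ × ℕ) × ℕ => q.1.2) := Primrec.snd.comp Primrec.fst
  have hr : Primrec (fun q : (ℕ × ℕ) × ℕ => q.2) := Primrec.snd
  have hfuel : Primrec (fun q : (ℕ × ℕ) × ℕ => 2 ^ (q.1.2 + 1) - 1) :=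
    Primrec.nat_sub.comp
      (primrec_pow.comp (Primrec.const 2) (Primrec.succ.comp hk)) (Primrec.const 1)
  have hstep : Primrec₂ (fun (q : (ℕ × ℕ) × ℕ) (p : ℕ × ℕ) =>
      if p.2 = 0 then
        (if 0 < cntS U q.1.1 p.1 ∧ rankF U q.1.1 q.1.2 p.1 = q.2
          then uval U q.1.1 p.1 + 1 else 0)
      else p.2) := by
    have hTm : Primrec (fun z : ((ℕ × ℕ) × ℕ) × ℕ × ℕ => cntS U z.1.1.1 z.2.1) :=
      (primrec_cntS U).comp (hT.comp Primrec.fst) (Primrec.fst.comp Primrec.snd)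
    have hrank : Primrec (fun z : ((ℕ × ℕ) × ℕ) × ℕ × ℕ =>
        rankF U z.1.1.1 z.1.1.2 z.2.1) :=
      (primrec_rankF U).comp
        (((hT.comp Primrec.fst).pair (hk.comp Primrec.fst)).pair
          (Primrec.fst.comp Primrec.snd))
    have huv : Primrec (fun z : ((ℕ × ℕ) × ℕ) × ℕ × ℕ => uval U z.1.1.1 z.2.1) :=
      (primrec_uval U).comp (hT.comp Primrec.fst) (Primrec.fst.comp Primrec.snd)
    have hcond : PrimrecPred (fun z : ((ℕ × ℕ) × ℕ) × ℕ × ℕ =>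
        0 < cntS U z.1.1.1 z.2.1 ∧ rankF U z.1.1.1 z.1.1.2 z.2.1 = z.1.2) :=
      (Primrec.nat_lt.comp (Primrec.const 0) hTm).and
        (Primrec.eq.comp hrank (Primrec.snd.comp Primrec.fst))
    have hst0 : PrimrecPred (fun z : ((ℕ × ℕ) × ℕ) × ℕ × ℕ => z.2.2 = 0) :=
      Primrec.eq.comp (Primrec.snd.comp Primrec.snd) (Primrec.const 0)
    exact (Primrec.ite hst0
      (Primrec.ite hcond (Primrec.succ.comp huv) (Primrec.const 0))
      (Primrec.snd.comp Primrec.snd)).to₂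
  have h := Primrec.nat_rec' hfuel (Primrec.const 0) hstep
  exact h.of_eq (fun q => by rw [findR]; rfl)

lemma primrec_tailD : Primrec tailD := by
  have := Primrec.ite
    (Primrec.eq.comp (Primrec.nat_mod.comp Primrec.id (Primrec.const 2)) (Primrec.const 1))
    (Primrec.nat_div.comp Primrec.id (Primrec.const 2))
    (Primrec.nat_sub.comp (Primrec.nat_div.comp Primrec.id (Primrec.const 2)) (Primrec.const 1))
  exact this.of_eq (fun b => by simp [tailD])

lemma primrec_dropD : Primrec₂ dropD := by
  have h : Primrec (fun p : ℕ × ℕ => Nat.rec (motive := fun _ => ℕ) p.2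
      (fun _ ih => tailD ih) p.1) :=
    Primrec.nat_rec' Primrec.fst Primrec.snd
      ((primrec_tailD.comp (Primrec.snd.comp Primrec.snd)).to₂)
  exact (h.of_eq (fun p => rfl)).to₂

lemma primrec_leadT : Primrec leadT := by
  have hstep : Primrec leadStep := by
    have hc : PrimrecPred (fun s : ℕ × ℕ => s.1 ≠ 0 ∧ s.1 % 2 = 0) :=
      ((Primrec.eq.comp Primrec.fst (Primrec.const 0)).not).and
        (Primrec.eq.comp (Primrec.nat_mod.comp Primrec.fst (Primrec.const 2))
          (Primrec.const 0))
    have := Primrec.ite hc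
      ((Primrec.nat_sub.comp (Primrec.nat_div.comp Primrec.fst (Primrec.const 2))
        (Primrec.const 1)).pair (Primrec.succ.comp Primrec.snd))
      Primrec.id
    exact this.of_eq (fun s => by simp [leadStep])
  have h : Primrec (fun b : ℕ => (Nat.rec (motive := fun _ => ℕ × ℕ) (b, 0)
      (fun _ ih => leadStep ih) b : ℕ × ℕ)) :=
    Primrec.nat_rec' Primrec.id (Primrec.id.pair (Primrec.const 0))
      ((hstep.comp (Primrec.snd.comp Primrec.snd)).to₂)
  exact (Primrec.snd.comp h).of_eq (fun b => by rw [leadT]; rfl)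

lemma primrec_takeN : Primrec₂ takeN :=
  (Primrec.nat_sub.comp Primrec.snd
    (Primrec.nat_mul.comp (primrec_pow.comp (Primrec.const 2) Primrec.fst)
      (primrec_dropD.comp Primrec.fst Primrec.snd))).to₂

lemma primrec_decodeG : Primrec decodeG := by
  have hμ : Primrec leadT := primrec_leadT
  have hb1 : Primrec (fun b : ℕ => dropD (leadT b + 1) b) :=
    primrec_dropD.comp (Primrec.succ.comp hμ) Primrec.id
  exact ((primrec_takeN.comp hμ hb1).pair (primrec_dropD.comp hμ hb1)).of_eq
    (fun b => by rw [decodeG])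

lemma primrec_decodeR : Primrec decodeR := by
  have hμ : Primrec leadT := primrec_leadT
  have hb1 : Primrec (fun b : ℕ => dropD (leadT b + 1) b) :=
    primrec_dropD.comp (Primrec.succ.comp hμ) Primrec.id
  have hk : Primrec (fun b : ℕ => takeN (leadT b) (dropD (leadT b + 1) b)) :=
    primrec_takeN.comp hμ hb1
  have hb2 : Primrec (fun b : ℕ => dropD (leadT b) (dropD (leadT b + 1) b)) :=
    primrec_dropD.comp hμ hb1
  have hν : Primrec (fun b : ℕ => leadT (dropD (leadT b) (dropD (leadT b + 1) b))) :=
    hμ.comp hb2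
  have hb3 : Primrec (fun b : ℕ =>
      dropD (leadT (dropD (leadT b) (dropD (leadT b + 1) b)) + 1)
        (dropD (leadT b) (dropD (leadT b + 1) b))) :=
    primrec_dropD.comp (Primrec.succ.comp hν) hb2
  exact (hk.pair ((primrec_takeN.comp hν hb3).pair (primrec_dropD.comp hν hb3))).of_eq
    (fun b => by rw [decodeR])

lemma partrec_fG : Nat.Partrec (fG U) := by
  have hp : Computable₂ (fun (nn κ : ℕ) => uhalt U κ nn.unpair.1) :=
    (((primrec_uhalt U).comp Primrec.snd
      (Primrec.fst.comp (Primrec.unpair.comp Primrec.fst))).to₂).to_comp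
  have hrfind : Partrec (fun nn : ℕ => Nat.rfind (fun κ => Part.some (uhalt U κ nn.unpair.1))) :=
    Partrec.rfind hp.partrec₂
  have hg : Computable₂ (fun (nn T : ℕ) =>
      findR U T (decodeG nn.unpair.2).1 (decodeG nn.unpair.2).2 - 1) := by
    have hdec : Primrec (fun nn : ℕ => decodeG nn.unpair.2) :=
      primrec_decodeG.comp (Primrec.snd.comp Primrec.unpair)
    exact ((Primrec.nat_sub.comp
      ((primrec_findR U).comp
        ((Primrec.snd.pair ((Primrec.fst.comp (hdec.comp Primrec.fst)))).pair
          (Primrec.snd.comp (hdec.comp Primrec.fst))))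
      (Primrec.const 1)).to₂).to_comp
  have := hrfind.map hg
  rw [← Partrec.nat_iff]
  exact this.of_eq (fun nn => by rw [fG]; try rfl)

lemma partrec_fR (D : ℕ) : Nat.Partrec (fR U D) := by
  have hdec : Primrec (fun nn : ℕ => decodeR nn.unpair.1) :=
    primrec_decodeR.comp (Primrec.fst.comp Primrec.unpair)
  have hp : Computable₂ (fun (nn κ : ℕ) => decide
      ((decodeR nn.unpair.1).2.2 * 2 ^ (decodeR nn.unpair.1).2.1
        ≤ Hk U (decodeR nn.unpair.1).1 κ)) := by
    have h1 : Primrec (fun z : ℕ × ℕ => (decodeR z.1.unpair.1).2.2 *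
        2 ^ (decodeR z.1.unpair.1).2.1) :=
      Primrec.nat_mul.comp (Primrec.snd.comp (Primrec.snd.comp (hdec.comp Primrec.fst)))
        (primrec_pow.comp (Primrec.const 2)
          (Primrec.fst.comp (Primrec.snd.comp (hdec.comp Primrec.fst))))
    have h2 : Primrec (fun z : ℕ × ℕ => Hk U (decodeR z.1.unpair.1).1 z.2) :=
      (primrec_Hk U).comp (Primrec.fst.comp (hdec.comp Primrec.fst)) Primrec.snd
    exact ((Primrec.nat_le.comp h1 h2)).decide.to_comp
  have hrfind := Partrec.rfind hp.partrec₂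
  have hg : Computable₂ (fun (_ τ : ℕ) => (τ + 1) ^ D) :=
    ((primrec_pow.comp (Primrec.succ.comp Primrec.snd) (Primrec.const D)).to₂).to_comp
  have := hrfind.map hg
  rw [← Partrec.nat_iff]
  exact this.of_eq (fun nn => by rw [fR]; try rfl)

end Computability

-- § bridges to the problem-statement definitions
lemma halttime_eq_htN (U : Code) (p : List Bool) : halttime U p = htN U (strToNat p) := rfl

lemma evalS_empty (U : Code) (p : List Bool) :
    evalS U p [] = U.eval (Nat.pair (strToNat p) 0) := rfl

lemma exists_uhalt_of_dom {U : Code} {p : List Bool} (h : haltsOn U p) :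
    ∃ κ, uhalt U κ (strToNat p) = true := by
  rw [haltsOn] at h
  obtain ⟨v, hv⟩ := Part.dom_iff_mem.1 h
  rw [evalS_empty] at hv
  obtain ⟨κ, hκ⟩ := evaln_complete.1 hv
  exact ⟨κ, by rw [uhalt]; rw [Option.isSome_iff_exists]; exact ⟨v, hκ⟩⟩

lemma uval_eq_of_outputs {U : Code} {p x : List Bool} {T : ℕ}
    (hout : outputs U p [] x) (hh : uhalt U T (strToNat p) = true) :
    uval U T (strToNat p) = strToNat x := by
  rw [uhalt, Option.isSome_iff_exists] at hh
  obtain ⟨v, hv⟩ := hh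
  have h1 : v ∈ U.eval (Nat.pair (strToNat p) 0) := evaln_sound hv
  have h2 : strToNat x ∈ U.eval (Nat.pair (strToNat p) 0) := by
    rw [← evalS_empty]; exact hout
  have := Part.mem_unique h1 h2
  rw [uval, hv]
  simpa using this

-- § auxiliary arithmetic
lemma log_mul_pow (n B : ℕ) (hn : 1 ≤ n) : Nat.log 2 (n * 2 ^ B) = Nat.log 2 n + B := by
  induction B with
  | zero => simp
  | succ B ih =>
    have h1 : n * 2 ^ (B+1) = (n * 2 ^ B) * 2 := by ring
    rw [h1, Nat.log_mul_base (by norm_num) (by positivity), ih]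
    omega

lemma two_pow_big (m : ℕ) : m + 1 ≤ 2 ^ m := by
  have := Nat.lt_two_pow_self (n := m)
  omega

end LB

theorem ldbb_bounds_soph :
    ∀ U : Nat.Partrec.Code, Universal U →
    ∃ e : ℕ, ∀ c : ℕ, ∀ x : List Bool, e ≤ x.length →
      soph U ((c : ℤ) + e * Nat.log 2 x.length) x ≤ ldbb U c x + e * Nat.log 2 x.length := by
  intro U hU
  classical
  obtain ⟨wP, hwP⟩ := hU Nat.Partrec.Code.left
  obtain ⟨wD, hwD⟩ := hU Nat.Partrec.Code.right
  obtain ⟨DU, hDU0, hDU⟩ := LB.evaln_out U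
  obtain ⟨cG, hcG⟩ := Nat.Partrec.Code.exists_code.1 (LB.partrec_fG U)
  obtain ⟨wG, hwG⟩ := hU cG
  obtain ⟨cR, hcR⟩ := Nat.Partrec.Code.exists_code.1 (LB.partrec_fR U DU)
  obtain ⟨wR, hwR⟩ := hU cR
  set B : ℕ := wP.length + 3 with hB
  set e : ℕ := wP.length + wD.length + wG.length + wR.length + 6 * B + 30 with he
  clear_value B e
  refine ⟨e, ?_⟩
  intro c x hex
  set n := x.length with hn
  have hn2 : 2 ≤ n := le_trans (by omega) hex
  have hlog1 : 1 ≤ Nat.log 2 n := Nat.log_pos (by norm_num) hn2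
  set L := Nat.log 2 n with hL
  -- print program: Cpx U x ≤ wP.length + n
  have hprint : ∀ y : List Bool, evalS U (wP ++ y) [] = Part.some (strToNat y) := by
    intro y
    have hV : evalS Nat.Partrec.Code.left y [] = Part.some (strToNat y) := by
      rw [evalS]
      simp [Nat.Partrec.Code.eval]
    rw [hwP y [] (by rw [hV]; trivial), hV]
  have hCpx_mem : (wP ++ x).length ∈ {m | ∃ p : List Bool, p.length = m ∧ outputs U p [] x} :=
    ⟨wP ++ x, rfl, by rw [outputs, hprint x]; simp⟩
  have hCpx_le : Cpx U x ≤ wP.length + n := by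
    have := Nat.sInf_le hCpx_mem
    rw [Cpx]
    simpa using this
  by_cases hc : n ≤ c
  · -- trivial case : data = x itself
    have htotD : ∀ d : List Bool, evalS U wD d = Part.some (strToNat d) := by
      intro d
      have hV : evalS Nat.Partrec.Code.right [] d = Part.some (strToNat d) := by
        rw [evalS]
        simp [Nat.Partrec.Code.eval]
      have := hwD [] d (by rw [hV]; trivial)
      rw [List.append_nil] at this
      rw [this, hV]
    have hmem : wD.length ∈ {m | ∃ p : List Bool, p.length = m ∧
        (∀ d : List Bool, (evalS U p d).Dom) ∧
        ∃ d : List Bool, outputs U p d x ∧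
          (p.length + d.length : ℤ) ≤ (Cpx U x : ℤ) + ((c : ℤ) + e * L)} := by
      refine ⟨wD, rfl, fun d => by rw [htotD d]; trivial, x, ?_, ?_⟩
      · rw [outputs, htotD x]; simp
      · have h1 : (wD.length : ℤ) ≤ (e : ℤ) * L := by
          have : (wD.length : ℕ) ≤ e * L := le_trans (by omega) (Nat.le_mul_of_pos_right e hlog1)
          exact_mod_cast this
        have h2 : (n : ℤ) ≤ c := by exact_mod_cast hc
        push_cast
        omega
    have h1 : soph U ((c : ℤ) + e * L) x ≤ wD.length := Nat.sInf_le hmem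
    have h2 : wD.length ≤ e * L := le_trans (by omega) (Nat.le_mul_of_pos_right e hlog1)
    exact le_trans h1 (le_trans h2 (Nat.le_add_left _ _))
  · -- main case : c < n
    push_neg at hc
    set k := Cpx U x + c with hk
    have hk2n : k ≤ 2 * n + wP.length := by omega
    -- shortest program for x
    have hCpxne : {m | ∃ p : List Bool, p.length = m ∧ outputs U p [] x}.Nonempty :=
      ⟨(wP ++ x).length, hCpx_mem⟩
    obtain ⟨pstar, hpstar_len, hpstar_out⟩ := Nat.sInf_mem hCpxne
    -- depth witness p₀
    have hldne : {s | ∃ p : List Bool, p.length ≤ Cpx U x + c ∧ outputs U p [] x ∧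
        halttime U p = s}.Nonempty :=
      ⟨halttime U pstar, pstar, by rw [hpstar_len, Cpx]; omega, hpstar_out, rfl⟩
    set t := ld U c x with ht
    obtain ⟨p₀, hp₀len, hp₀out, hp₀t⟩ : ∃ p : List Bool, p.length ≤ Cpx U x + c ∧
        outputs U p [] x ∧ halttime U p = t := Nat.sInf_mem hldne
    set m₀ := strToNat p₀ with hm₀
    have hp₀dom : haltsOn U p₀ := Part.dom_iff_mem.2 ⟨strToNat x, hp₀out⟩
    have hm₀halts : ∃ κ, LB.uhalt U κ m₀ = true := LB.exists_uhalt_of_dom hp₀dom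
    have hhtm₀ : LB.htN U m₀ = t := by rw [← hp₀t, LB.halttime_eq_htN]
    have ht1 : 1 ≤ t := by rw [← hhtm₀]; exact LB.htN_pos hm₀halts
    -- busy beaver witness q
    have hbbne : {m | ∃ p : List Bool, p.length = m ∧ haltsOn U p ∧ t ≤ halttime U p}.Nonempty :=
      ⟨p₀.length, p₀, rfl, hp₀dom, by rw [hp₀t]⟩
    obtain ⟨q, hqlen, hqdom, hqT⟩ : ∃ p : List Bool, p.length = bbInv U t ∧ haltsOn U p ∧
        t ≤ halttime U p := Nat.sInf_mem hbbne
    set l := bbInv U t with hldef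
    set mq := strToNat q with hmq
    set T := halttime U q with hT
    have hmqhalts : ∃ κ, LB.uhalt U κ mq = true := LB.exists_uhalt_of_dom hqdom
    have hhtmq : LB.htN U mq = T := by rw [hT, LB.halttime_eq_htN]
    have huT : LB.uhalt U T mq = true := by rw [← hhtmq]; exact LB.htN_halts hmqhalts
    have htT : t ≤ T := hqT
    -- the range bound
    set N := 2 ^ (k + 1) - 1 with hN
    have hm₀N : m₀ < N := by
      have h1 := LB.strToNat_ub p₀
      have h2 : 2 ^ (p₀.length + 1) ≤ 2 ^ (k + 1) :=
        Nat.pow_le_pow_right (by norm_num) (by omega)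
      rw [hN, hm₀]
      omega
    have hum₀T : LB.uhalt U T m₀ = true := by
      refine LB.uhalt_mono htT ?_
      rw [← hhtm₀]
      exact LB.htN_halts hm₀halts
    have hum₀t' : LB.uhalt U (t - 1) m₀ = false :=
      LB.uhalt_false_of_lt_htN (by omega)
    -- counting
    have hHkmono : LB.Hk U k (t - 1) ≤ LB.Hk U k T := LB.Hk_mono (by omega)
    set mcnt := LB.Hk U k T - LB.Hk U k (t - 1) with hmcnt
    clear_value mcnt
    have hmcnt1 : 1 ≤ mcnt := by
      have := LB.cntUpTo_lt_of_witness
        (f := fun m => LB.uhalt U (t-1) m) (g := fun m => LB.uhalt U T m)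
        (N := N) (m₀ := m₀)
        (fun m _ hm => LB.uhalt_mono (by omega) hm) hm₀N hum₀T hum₀t'
      rw [hmcnt]
      have h2 : LB.Hk U k (t-1) < LB.Hk U k T := this
      omega
    set j := Nat.log 2 mcnt with hj
    clear_value j
    have h2j : 2 ^ j ≤ mcnt := by
      rw [hj]; exact Nat.pow_log_le_self 2 (by omega)
    have hj2 : mcnt < 2 ^ (j + 1) := by
      rw [hj]; exact Nat.lt_pow_succ_log_self (by norm_num) mcnt
    have hHkT_le : LB.Hk U k T ≤ N := LB.cntUpTo_le _ _
    have hHkt'_le : LB.Hk U k (t-1) ≤ N := LB.cntUpTo_le _ _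
    have hjk : j ≤ k := by
      have h1 : 2 ^ j ≤ 2 ^ (k+1) - 1 := by omega
      have h2 : 2 ^ j < 2 ^ (k+1) := by
        have := Nat.one_le_two_pow (n := k+1)
        omega
      have := (Nat.pow_lt_pow_iff_right (by norm_num : 1 < 2)).1 h2
      omega
    set a := LB.Hk U k (t - 1) / 2 ^ j + 1 with ha
    clear_value a
    -- the R program
    set ρ := LB.encR k j a with hρ
    have hdecρ : LB.decodeR (strToNat ρ) = (k, j, a) := LB.decodeR_encR k j a
    have hdivmul : LB.Hk U k (t-1) / 2 ^ j * 2 ^ j ≤ LB.Hk U k (t-1) := Nat.div_mul_le_self _ _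
    have hamul : a * 2 ^ j = LB.Hk U k (t-1) / 2 ^ j * 2 ^ j + 2 ^ j := by rw [ha]; ring
    have hdivmul2 : LB.Hk U k (t-1) < LB.Hk U k (t-1) / 2 ^ j * 2 ^ j + 2 ^ j :=
      Nat.lt_div_mul_add (by positivity)
    have h12j : 1 ≤ 2 ^ j := Nat.one_le_two_pow
    have hex : ∃ κ, a * 2 ^ j ≤ LB.Hk U k κ := ⟨T, by omega⟩
    set τ := sInf {κ | a * 2 ^ j ≤ LB.Hk U k κ} with hτ
    clear_value τ
    have hτmem : a * 2 ^ j ≤ LB.Hk U k τ := by rw [hτ]; exact Nat.sInf_mem hex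
    have hτt : t ≤ τ := by
      by_contra hcon
      push_neg at hcon
      have h1 : LB.Hk U k τ ≤ LB.Hk U k (t-1) := LB.Hk_mono (by omega)
      omega
    have hfRρ : evalS cR ρ [] = Part.some ((τ + 1) ^ DU) := by
      rw [LB.evalS_empty, hcR]
      have h0 := LB.fR_eq U DU (strToNat ρ) 0 (by rw [hdecρ]; exact hex)
      rw [hdecρ] at h0
      rw [← hτ] at h0
      exact h0
    have hURρ : evalS U (wR ++ ρ) [] = Part.some ((τ + 1) ^ DU) := by
      rw [hwR ρ [] (by rw [hfRρ]; trivial), hfRρ]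
    have hRdom : haltsOn U (wR ++ ρ) := by rw [haltsOn, hURρ]; trivial
    have hRhalts : ∃ κ, LB.uhalt U κ (strToNat (wR ++ ρ)) = true := LB.exists_uhalt_of_dom hRdom
    have hht : t ≤ halttime U (wR ++ ρ) := by
      set hh := halttime U (wR ++ ρ) with hhh
      have h1 : LB.uhalt U hh (strToNat (wR ++ ρ)) = true := by
        rw [hhh, LB.halttime_eq_htN]; exact LB.htN_halts hRhalts
      rw [LB.uhalt, Option.isSome_iff_exists] at h1
      obtain ⟨v, hv⟩ := h1
      have h2 : v ∈ U.eval (Nat.pair (strToNat (wR ++ ρ)) 0) :=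
        Nat.Partrec.Code.evaln_sound hv
      have h3 : v = (τ + 1) ^ DU := by
        have h4 := hURρ
        rw [LB.evalS_empty] at h4
        rw [h4] at h2
        simpa [Part.mem_some_iff] using h2
      have h4 : v ≤ (hh + 1) ^ DU := hDU hh _ v hv
      by_contra hcon
      push_neg at hcon
      have h5 : (hh + 1) ^ DU < (τ + 1) ^ DU :=
        Nat.pow_lt_pow_left (by omega) (by omega)
      omega
    have hlle : l ≤ (wR ++ ρ).length := by
      rw [hldef, bbInv]
      exact Nat.sInf_le ⟨wR ++ ρ, rfl, hRdom, hht⟩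
    -- length of the field a
    have hat : a ≤ 2 ^ (k + 1 - j) + 1 := by
      have h1 : LB.Hk U k (t-1) / 2 ^ j ≤ (2 ^ (k+1) - 1) / 2 ^ j :=
        Nat.div_le_div_right hHkt'_le
      have h2 : (2 ^ (k+1) - 1) / 2 ^ j ≤ 2 ^ (k+1) / 2 ^ j :=
        Nat.div_le_div_right (by omega)
      have h3 : 2 ^ (k+1) / 2 ^ j = 2 ^ (k+1-j) := Nat.pow_div (by omega) (by norm_num)
      omega
    have hlena : (LB.natToStr a).length ≤ k + 2 - j := by
      apply LB.length_natToStr_le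
      have h1 : 1 ≤ 2 ^ (k+1-j) := Nat.one_le_two_pow
      have h2 : (k + 2 - j) + 1 = (k+1-j) + 2 := by omega
      rw [h2, pow_add]
      have h4 : (2:ℕ)^2 = 4 := by norm_num
      rw [h4]
      omega
    have hρlen : (wR ++ ρ).length = wR.length + (2 * (LB.natToStr k).length
        + 2 * (LB.natToStr j).length + (LB.natToStr a).length + 2) := by
      rw [List.length_append, hρ, LB.length_encR]
    -- the G program and its data
    set r₀ := LB.rankF U T k m₀ with hr₀def
    set d := LB.encG k r₀ with hd
    have hdecd : LB.decodeG (strToNat d) = (k, r₀) := by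
      rw [hd]; exact LB.decodeG_encG k r₀
    have hGeval : ∀ d' : List Bool, evalS cG q d' =
        Part.some (LB.findR U T (LB.decodeG (strToNat d')).1 (LB.decodeG (strToNat d')).2 - 1) := by
      intro d'
      rw [evalS, hcG]
      have h0 := LB.fG_eq U mq (strToNat d') hmqhalts
      rw [hhtmq] at h0
      rw [← hmq]
      exact h0
    have htotG : ∀ d' : List Bool, (evalS U (wG ++ q) d').Dom := by
      intro d'
      rw [hwG q d' (by rw [hGeval d']; trivial), hGeval d']
      trivial
    have hkapm₀ : LB.kappaF U T m₀ = t := by rw [LB.kappaF_eq_htN hum₀T, hhtm₀]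
    -- rank strict monotonicity and injectivity
    have hstrict : ∀ m1 m2, m2 < N → LB.rnkPred U T m1 m2 = true →
        LB.rankF U T k m2 < LB.rankF U T k m1 := by
      intro m1 m2 hm2 hbeat
      apply LB.cntUpTo_lt_of_witness (m₀ := m2) _ hm2 hbeat
      · rw [LB.rnkPred]
        simp only [decide_eq_false_iff_not]
        rintro ⟨-, h | ⟨-, h⟩⟩ <;> omega
      · intro m'' _ h''
        rw [LB.rnkPred] at h'' hbeat ⊢
        simp only [decide_eq_true_eq] at h'' hbeat ⊢
        obtain ⟨hcb, hlexb⟩ := hbeat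
        obtain ⟨hc'', hlex''⟩ := h''
        refine ⟨hc'', ?_⟩
        rcases hlexb with h1 | ⟨h1, h1'⟩ <;> rcases hlex'' with h2 | ⟨h2, h2'⟩ <;>
          [left; left; left; right] <;> omega
    have hrankinj : ∀ m < N, (0 < LB.cntS U T m ∧ LB.rankF U T k m = r₀) → m = m₀ := by
      intro m hmN hpm
      obtain ⟨hpm1, hpm2⟩ := hpm
      have hhm : LB.uhalt U T m = true := LB.cntS_pos_iff.1 hpm1
      by_contra hne
      have hc2 : 0 < LB.cntS U T m₀ := LB.cntS_pos_iff.2 hum₀T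
      have hkey : LB.rnkPred U T m₀ m = true ∨ LB.rnkPred U T m m₀ = true := by
        rw [LB.rnkPred, LB.rnkPred]
        simp only [decide_eq_true_eq]
        rcases lt_trichotomy (LB.kappaF U T m₀) (LB.kappaF U T m) with h | h | h
        · exact Or.inl ⟨hpm1, Or.inl h⟩
        · rcases lt_trichotomy m₀ m with h' | h' | h'
          · exact Or.inl ⟨hpm1, Or.inr ⟨h.symm, h'⟩⟩
          · exact absurd h'.symm hne
          · exact Or.inr ⟨hc2, Or.inr ⟨h, h'⟩⟩
        · exact Or.inr ⟨hc2, Or.inl h⟩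
      rcases hkey with hbeat | hbeat
      · have := hstrict m₀ m hmN hbeat
        rw [hpm2, ← hr₀def] at this
        omega
      · have := hstrict m m₀ hm₀N hbeat
        rw [hpm2, ← hr₀def] at this
        omega
    have hpredm₀ : 0 < LB.cntS U T m₀ ∧ LB.rankF U T k m₀ = r₀ :=
      ⟨LB.cntS_pos_iff.2 hum₀T, hr₀def.symm⟩
    have hfind : LB.findR U T k r₀ = LB.uval U T m₀ + 1 := by
      rw [LB.findR]
      exact LB.findRA_spec hrankinj hm₀N hpredm₀
    have huvm₀ : LB.uval U T m₀ = strToNat x := LB.uval_eq_of_outputs hp₀out hum₀T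
    have houtG : outputs U (wG ++ q) d x := by
      rw [outputs, hwG q d (by rw [hGeval d]; trivial), hGeval d, hdecd]
      rw [show ((k, r₀).1 : ℕ) = k from rfl, show ((k, r₀).2 : ℕ) = r₀ from rfl]
      rw [hfind, huvm₀]
      simp
    -- bound on r₀
    have hsplit : LB.Hk U k T = LB.Hk U k (t-1) +
        LB.cntUpTo (fun m => LB.uhalt U T m && !LB.uhalt U (t-1) m) N :=
      LB.cntUpTo_split (fun m _ hm => LB.uhalt_mono (by omega) hm)
    have hrlt : r₀ < LB.cntUpTo (fun m => LB.uhalt U T m && !LB.uhalt U (t-1) m) N := by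
      rw [hr₀def]
      apply LB.cntUpTo_lt_of_witness (m₀ := m₀) _ hm₀N (by rw [hum₀T, hum₀t']; rfl)
      · rw [LB.rnkPred]
        simp only [decide_eq_false_iff_not]
        rintro ⟨-, h | ⟨-, h⟩⟩ <;> omega
      · intro m' _ h'
        rw [LB.rnkPred] at h'
        simp only [decide_eq_true_eq] at h'
        obtain ⟨hc', hlex'⟩ := h'
        have hhm' : LB.uhalt U T m' = true := LB.cntS_pos_iff.1 hc'
        have hkm' : LB.kappaF U T m' = LB.htN U m' := LB.kappaF_eq_htN hhm'
        have hge : t ≤ LB.htN U m' := by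
          rcases hlex' with h1 | ⟨h1, -⟩ <;> omega
        have hfalse : LB.uhalt U (t-1) m' = false :=
          LB.uhalt_false_of_lt_htN (by omega)
        rw [hhm', hfalse]
        rfl
    have hr₀mcnt : r₀ + 1 ≤ mcnt := by omega
    have hlenr₀ : (LB.natToStr r₀).length ≤ j := by
      apply LB.length_natToStr_le
      omega
    -- log-length bounds
    have hlogk1 : Nat.log 2 (k + 1) ≤ L + B := by
      have h3 : wP.length + 3 ≤ 2 ^ B := by
        rw [hB]
        have := LB.two_pow_big (wP.length + 3)
        omega
      have h2 : k + 1 ≤ n * 2 ^ B := by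
        have hw : wP.length ≤ wP.length * n := Nat.le_mul_of_pos_right _ (by omega)
        have hr1 : (wP.length + 3) * n = wP.length * n + 3 * n := by ring
        have h4 : k + 1 ≤ (wP.length + 3) * n := by omega
        have h5 : (wP.length + 3) * n ≤ 2 ^ B * n := Nat.mul_le_mul_right n h3
        have hr2 : 2 ^ B * n = n * 2 ^ B := by ring
        omega
      calc Nat.log 2 (k+1) ≤ Nat.log 2 (n * 2 ^ B) := Nat.log_mono_right h2
        _ = L + B := by rw [LB.log_mul_pow n B (by omega), hL]
    have hlenk : (LB.natToStr k).length ≤ L + B :=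
      le_trans (LB.length_natToStr_le_log k) hlogk1
    have hlenj : (LB.natToStr j).length ≤ L + B :=
      le_trans (LB.length_natToStr_le_log j)
        (le_trans (Nat.log_mono_right (by omega)) hlogk1)
    -- significance inequality
    have hlG : (wG ++ q).length = wG.length + l := by
      rw [List.length_append, hqlen]
    have hlend : d.length = 2 * (LB.natToStr k).length + 1 + (LB.natToStr r₀).length := by
      rw [hd, LB.length_encG]
    have hSig : (wG ++ q).length + d.length ≤ Cpx U x + c + e * L := by
      have hA1 : (wG.length + wR.length + 6*B + 5) ≤ (wG.length + wR.length + 6*B + 5) * L :=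
        Nat.le_mul_of_pos_right _ hlog1
      have hA2 : (wG.length + wR.length + 6*B + 11) * L ≤ e * L :=
        Nat.mul_le_mul_right L (by omega)
      have hA3 : (wG.length + wR.length + 6*B + 11) * L
          = (wG.length + wR.length + 6*B + 5) * L + 6 * L := by ring
      have hlk6 : 4 * (LB.natToStr k).length + 2 * (LB.natToStr j).length ≤ 6 * (L + B) := by
        omega
      have h6LB : 6 * (L + B) = 6 * L + 6 * B := by ring
      omega
    -- conclusion
    have hsophle : soph U ((c:ℤ) + e * L) x ≤ (wG ++ q).length := by
      apply Nat.sInf_le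
      refine ⟨wG ++ q, rfl, htotG, d, houtG, ?_⟩
      have h' : (((wG ++ q).length + d.length : ℕ) : ℤ) ≤ ((Cpx U x + c + e * L : ℕ) : ℤ) := by
        exact_mod_cast hSig
      push_cast at h'
      push_cast
      omega
    have hldbb : ldbb U c x = l := by
      rw [ldbb, ← ht, ← hldef]
    have hwGe : wG.length ≤ e * L := le_trans (by omega) (Nat.le_mul_of_pos_right e hlog1)
    rw [hldbb]
    rw [hlG] at hsophle
    omega
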